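/- Assume transaction costs are zero, so G(a) = Σ_{t<m} a_t·(H_T^{(t)} − H_t^{(t)}) and all policies are admissible. Let a* be a policy minimizing E_P[exp(−G(a))] over all policies, with 0 < E_P[exp(−G(a*))] < ∞, and define Q* by dQ*/dP = exp(−G(a*)) / E_P[exp(−G(a*))]. Then Q* is an equivalent martingale measure: for every t < m and every instrument i, E_{Q*}[H_T^{(t,i)} | 𝓕_t] = H_t^{(t,i)} Q*-almost surely. -/

import Mathlib

open MeasureTheory ENNReal Real Filter Set
open scoped Topology

noncomputable section

variable {Ω : Type*}

/-- A policy: at each time `t < m`, an `F t`-measurable, essentially bounded action in `ℝ^n`. -/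
def IsPolicy {mΩ : MeasurableSpace Ω} (P : Measure Ω) (m n : ℕ) (F : ℕ → MeasurableSpace Ω)
    (a : ℕ → Ω → Fin n → ℝ) : Prop :=
  ∀ t < m, Measurable[F t] (a t) ∧ ∃ C : ℝ, ∀ᵐ ω ∂P, ∀ i, |a t ω i| ≤ C

/-- Terminal gain of a policy with zero transaction costs:
`G(a) = Σ_{t<m} a_t · (H_T^{(t)} - H_t^{(t)})`. -/
def linGain (m n : ℕ) (Hmid HT : ℕ → Ω → Fin n → ℝ)
    (a : ℕ → Ω → Fin n → ℝ) (ω : Ω) : ℝ :=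
  ∑ t ∈ Finset.range m, ∑ i, a t ω i * (HT t ω i - Hmid t ω i)


lemma exp_le_quad {x : ℝ} (hx : |x| ≤ 1) : Real.exp x ≤ 1 + x + x ^ 2 := by
  have := Real.abs_exp_sub_one_sub_id_le hx
  have := abs_le.1 this
  linarith [this.2]

lemma key_lemma {Ω : Type*} {mΩ : MeasurableSpace Ω} (P : Measure Ω) [IsProbabilityMeasure P]
    (W h : Ω → ℝ) (hW : Measurable W) (hh : Measurable h) (K M : ℝ)
    (hWnn : ∀ ω, 0 ≤ W ω) (hWb : ∀ᵐ ω ∂P, W ω ≤ K) (hhb : ∀ᵐ ω ∂P, |h ω| ≤ M)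
    (hmin : ∀ ε : ℝ, ∫ ω, W ω ∂P ≤ ∫ ω, W ω * Real.exp (-(ε * h ω)) ∂P) :
    ∫ ω, W ω * h ω ∂P = 0 := by
  haveI : (ae P).NeBot := ae_neBot.2 (IsProbabilityMeasure.ne_zero P)
  obtain ⟨ω₀, hω₀⟩ := hhb.exists
  have hM : 0 ≤ M := le_trans (abs_nonneg _) hω₀
  obtain ⟨ω₁, hω₁⟩ := hWb.exists
  have hK : 0 ≤ K := le_trans (hWnn ω₁) hω₁
  -- integrability facts
  have intW : Integrable W P := by
    refine Integrable.mono' (integrable_const K) hW.aestronglyMeasurable ?_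
    filter_upwards [hWb] with ω hb
    rwa [Real.norm_eq_abs, abs_of_nonneg (hWnn ω)]
  have intWf : ∀ (f : Ω → ℝ), Measurable f → (∀ᵐ ω ∂P, |f ω| ≤ M) →
      Integrable (fun ω => W ω * f ω) P := by
    intro f hf hfb
    refine Integrable.mono' (integrable_const (K * M)) (hW.mul hf).aestronglyMeasurable ?_
    filter_upwards [hWb, hfb] with ω h1 h2
    rw [Real.norm_eq_abs, abs_mul, abs_of_nonneg (hWnn ω)]
    exact mul_le_mul h1 h2 (abs_nonneg _) hK
  -- the one-sided claim
  have claim : ∀ (f : Ω → ℝ), Measurable f → (∀ᵐ ω ∂P, |f ω| ≤ M) →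
      (∀ ε : ℝ, ∫ ω, W ω ∂P ≤ ∫ ω, W ω * Real.exp (-(ε * f ω)) ∂P) →
      ∫ ω, W ω * f ω ∂P ≤ 0 := by
    intro f hf hfb hm
    set I := ∫ ω, W ω * f ω ∂P with hI
    have intWf1 := intWf f hf hfb
    have intWsq : Integrable (fun ω => W ω * f ω ^ 2) P := by
      refine Integrable.mono' (integrable_const (K * M ^ 2))
        (hW.mul (hf.pow_const 2)).aestronglyMeasurable ?_
      filter_upwards [hWb, hfb] with ω h1 h2
      rw [Real.norm_eq_abs, abs_mul, abs_of_nonneg (hWnn ω), abs_of_nonneg (sq_nonneg _)]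
      exact mul_le_mul h1 (by nlinarith [abs_nonneg (f ω), sq_abs (f ω)]) (sq_nonneg _) hK
    have hIsq : ∫ ω, W ω * f ω ^ 2 ∂P ≤ K * M ^ 2 := by
      calc ∫ ω, W ω * f ω ^ 2 ∂P ≤ ∫ _ω, K * M ^ 2 ∂P := by
            refine integral_mono_ae intWsq (integrable_const _) ?_
            filter_upwards [hWb, hfb] with ω h1 h2
            have : f ω ^ 2 ≤ M ^ 2 := by nlinarith [abs_nonneg (f ω), sq_abs (f ω)]
            exact mul_le_mul h1 this (sq_nonneg _) hK
        _ = K * M ^ 2 := by simp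
    have step : ∀ ε : ℝ, 0 < ε → ε ≤ 1 / (M + 1) → I ≤ ε * (K * M ^ 2) := by
      intro ε hε hε1
      have hεM : ∀ x : ℝ, |x| ≤ M → |(-(ε * x))| ≤ 1 := by
        intro x hx
        rw [abs_neg, abs_mul, abs_of_pos hε]
        calc ε * |x| ≤ (1 / (M + 1)) * M :=
              mul_le_mul hε1 hx (abs_nonneg _) (by positivity)
          _ ≤ 1 := by rw [div_mul_eq_mul_div, div_le_one (by linarith)]; linarith
      have intexp : Integrable (fun ω => W ω * Real.exp (-(ε * f ω))) P := by
        refine Integrable.mono' (integrable_const (K * Real.exp 1))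
          (hW.mul ((measurable_const.mul hf).neg.exp)).aestronglyMeasurable ?_
        filter_upwards [hWb, hfb] with ω h1 h2
        rw [Real.norm_eq_abs, abs_mul, abs_of_nonneg (hWnn ω), abs_of_pos (Real.exp_pos _)]
        refine mul_le_mul h1 ?_ (Real.exp_pos _).le hK
        exact Real.exp_le_exp.2 (le_trans (le_abs_self _) (hεM _ h2))
      have hpt : ∀ᵐ ω ∂P, W ω * Real.exp (-(ε * f ω)) ≤
          W ω - ε * (W ω * f ω) + ε ^ 2 * (W ω * f ω ^ 2) := by
        filter_upwards [hfb] with ω h2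
        have := exp_le_quad (hεM _ h2)
        nlinarith [hWnn ω, mul_le_mul_of_nonneg_left this (hWnn ω)]
      have ig1 : Integrable (fun ω => W ω - ε * (W ω * f ω)) P := intW.sub (intWf1.const_mul ε)
      have ig2 : Integrable (fun ω => ε ^ 2 * (W ω * f ω ^ 2)) P := intWsq.const_mul (ε ^ 2)
      have h1 : ∫ ω, W ω ∂P ≤ ∫ ω, (W ω - ε * (W ω * f ω) + ε ^ 2 * (W ω * f ω ^ 2)) ∂P :=
        le_trans (hm ε) (integral_mono_ae intexp (ig1.add ig2) hpt)
      rw [integral_add ig1 ig2, integral_sub intW (intWf1.const_mul ε), integral_const_mul,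
        integral_const_mul] at h1
      have h2 : ε * I ≤ ε * (ε * (K * M ^ 2)) := by nlinarith [hIsq, sq_nonneg ε]
      exact le_of_mul_le_mul_left h2 hε
    have : I ≤ 0 := by
      have tends : Tendsto (fun ε : ℝ => ε * (K * M ^ 2)) (𝓝[>] (0:ℝ)) (𝓝 0) := by
        have : Tendsto (fun ε : ℝ => ε * (K * M ^ 2)) (𝓝 0) (𝓝 (0 * (K * M ^ 2))) :=
          (continuous_id.mul continuous_const).tendsto 0
        simpa using this.mono_left nhdsWithin_le_nhds
      refine ge_of_tendsto tends ?_
      filter_upwards [Ioc_mem_nhdsGT_of_mem (show (0:ℝ) ∈ Ico (0:ℝ) (1/(M+1)) from ⟨le_refl _, by positivity⟩)] with ε hε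
      exact step ε hε.1 hε.2
    exact this
  have hle := claim h hh hhb hmin
  have hge : ∫ ω, W ω * (-h ω) ∂P ≤ 0 := by
    refine claim (fun ω => -h ω) hh.neg (by simpa using hhb) fun ε => ?_
    simpa [neg_mul, mul_neg, neg_neg] using hmin (-ε)
  have : ∫ ω, W ω * (-h ω) ∂P = -∫ ω, W ω * h ω ∂P := by
    simp_rw [mul_neg]
    exact integral_neg _
  linarith

/-- With zero transaction costs, if `a*` minimizes `E_P[exp(-G(a))]` over
all policies (with finite positive minimum) and `dQ*/dP = exp(-G(a*))/E_P[exp(-G(a*))]`, then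
`Q*` is a martingale measure: `E_{Q*}[H_T^{(t,i)} | F_t] = H_t^{(t,i)}` `Q*`-a.s. -/
theorem stmt_10
    {mΩ : MeasurableSpace Ω} (P : Measure Ω) [IsProbabilityMeasure P]
    (m n : ℕ) (F : ℕ → MeasurableSpace Ω) (hF_mono : Monotone F) (hF_le : ∀ t, F t ≤ mΩ)
    (Hmid HT : ℕ → Ω → Fin n → ℝ)
    (hHmid_meas : ∀ t < m, Measurable[F t] (Hmid t))
    (hHT_meas : ∀ t < m, Measurable[F m] (HT t))
    (hHmid_bdd : ∀ t < m, ∃ C : ℝ, ∀ᵐ ω ∂P, ∀ i, |Hmid t ω i| ≤ C)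
    (hHT_bdd : ∀ t < m, ∃ C : ℝ, ∀ᵐ ω ∂P, ∀ i, |HT t ω i| ≤ C)
    (astar : ℕ → Ω → Fin n → ℝ) (hastar : IsPolicy P m n F astar)
    (hmin : ∀ a, IsPolicy P m n F a →
      (∫⁻ ω, ENNReal.ofReal (Real.exp (-linGain m n Hmid HT astar ω)) ∂P) ≤
        ∫⁻ ω, ENNReal.ofReal (Real.exp (-linGain m n Hmid HT a ω)) ∂P)
    (hZpos : 0 < ∫⁻ ω, ENNReal.ofReal (Real.exp (-linGain m n Hmid HT astar ω)) ∂P)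
    (hZfin : (∫⁻ ω, ENNReal.ofReal (Real.exp (-linGain m n Hmid HT astar ω)) ∂P) ≠ ∞) :
    let Qstar : Measure Ω := P.withDensity (fun ω =>
      ENNReal.ofReal (Real.exp (-linGain m n Hmid HT astar ω)) /
        ∫⁻ ω', ENNReal.ofReal (Real.exp (-linGain m n Hmid HT astar ω')) ∂P)
    ∀ t < m, ∀ i : Fin n,
      (Qstar[fun ω => HT t ω i | F t]) =ᵐ[Qstar] fun ω => Hmid t ω i := by
  classical
  intro Qstar t ht i
  set G : Ω → ℝ := linGain m n Hmid HT astar with hGdef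
  set Wf : Ω → ℝ := fun ω => Real.exp (-G ω) with hWdef
  -- measurability of component maps
  have hcomp_meas : ∀ (t' : ℕ), t' < m → ∀ j : Fin n,
      Measurable (fun ω => astar t' ω j) ∧ Measurable (fun ω => HT t' ω j) ∧
      Measurable (fun ω => Hmid t' ω j) := by
    intro t' ht' j
    refine ⟨(measurable_pi_apply j).comp (((hastar t' ht').1).mono (hF_le t') le_rfl),
      (measurable_pi_apply j).comp ((hHT_meas t' ht').mono (hF_le m) le_rfl),
      (measurable_pi_apply j).comp ((hHmid_meas t' ht').mono (hF_le t') le_rfl)⟩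
  have hG_meas : Measurable G := by
    rw [hGdef]
    unfold linGain
    refine Finset.measurable_sum _ fun t' ht' => Finset.measurable_sum _ fun j _ => ?_
    have ht'' := Finset.mem_range.mp ht'
    obtain ⟨h1, h2, h3⟩ := hcomp_meas t' ht'' j
    exact h1.mul (h2.sub h3)
  have hW_meas : Measurable Wf := hG_meas.neg.exp
  have hWnn : ∀ ω, 0 ≤ Wf ω := fun ω => (Real.exp_pos _).le
  -- a.e. bound on G
  set Ca : ℕ → ℝ := fun t' => if h : t' < m then ((hastar t' h).2).choose else 0 with hCa
  set Cm : ℕ → ℝ := fun t' => if h : t' < m then (hHmid_bdd t' h).choose else 0 with hCm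
  set Ct : ℕ → ℝ := fun t' => if h : t' < m then (hHT_bdd t' h).choose else 0 with hCt
  have hae : ∀ᵐ ω ∂P, ∀ t', t' < m →
      (∀ j, |astar t' ω j| ≤ Ca t') ∧ (∀ j, |Hmid t' ω j| ≤ Cm t') ∧
      (∀ j, |HT t' ω j| ≤ Ct t') := by
    rw [ae_all_iff]
    intro t'
    by_cases h : t' < m
    · filter_upwards [((hastar t' h).2).choose_spec, (hHmid_bdd t' h).choose_spec,
        (hHT_bdd t' h).choose_spec] with ω h1 h2 h3 _
      refine ⟨fun j => ?_, fun j => ?_, fun j => ?_⟩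
      · simpa [hCa, dif_pos h] using h1 j
      · simpa [hCm, dif_pos h] using h2 j
      · simpa [hCt, dif_pos h] using h3 j
    · filter_upwards with ω h'
      exact absurd h' h
  set B : ℝ := ∑ t' ∈ Finset.range m, ∑ _j : Fin n, Ca t' * (Ct t' + Cm t') with hB
  have hGbd : ∀ᵐ ω ∂P, |G ω| ≤ B := by
    filter_upwards [hae] with ω hω
    rw [hGdef]
    unfold linGain
    refine le_trans (Finset.abs_sum_le_sum_abs _ _) ?_
    rw [hB]
    refine Finset.sum_le_sum fun t' ht' => ?_
    refine le_trans (Finset.abs_sum_le_sum_abs _ _) ?_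
    refine Finset.sum_le_sum fun j _ => ?_
    obtain ⟨h1, h2, h3⟩ := hω t' (Finset.mem_range.mp ht')
    rw [abs_mul]
    refine mul_le_mul (h1 j) (le_trans (abs_sub _ _) ?_) (abs_nonneg _)
      (le_trans (abs_nonneg _) (h1 j))
    exact add_le_add (h3 j) (h2 j)
  have hWub : ∀ᵐ ω ∂P, Wf ω ≤ Real.exp B := by
    filter_upwards [hGbd] with ω hω
    exact Real.exp_le_exp.2 (by cases abs_le.1 hω; linarith)
  have intW : Integrable Wf P := by
    refine Integrable.mono' (integrable_const (Real.exp B)) hW_meas.aestronglyMeasurable ?_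
    filter_upwards [hWub] with ω hb
    rwa [Real.norm_eq_abs, abs_of_nonneg (hWnn ω)]
  -- Z and z
  set Z : ℝ≥0∞ := ∫⁻ ω, ENNReal.ofReal (Wf ω) ∂P with hZ
  set z : ℝ := ∫ ω, Wf ω ∂P with hz
  have hZeq : Z = ENNReal.ofReal z :=
    (ofReal_integral_eq_lintegral_ofReal intW (ae_of_all _ hWnn)).symm
  have hzpos : 0 < z := by
    have h0 : (0:ℝ≥0∞) < Z := hZpos
    rw [hZeq] at h0
    exact ENNReal.ofReal_pos.mp h0
  -- rewrite Qstar via an ℝ≥0 density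
  set dens : Ω → NNReal := fun ω => (Wf ω / z).toNNReal with hdens
  have hdens_meas : Measurable dens := (hW_meas.div_const z).real_toNNReal
  have hdens_coe : ∀ ω, ((dens ω : ℝ)) = Wf ω / z := fun ω =>
    Real.coe_toNNReal _ (div_nonneg (hWnn ω) hzpos.le)
  have hQdens : Qstar = P.withDensity (fun ω => ((dens ω : ℝ≥0∞))) := by
    show P.withDensity _ = _
    congr 1
    funext ω
    show ENNReal.ofReal (Wf ω) / Z = _
    rw [hZeq, ← ENNReal.ofReal_div_of_pos hzpos]
    rfl
  -- Qstar is a probability measure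
  haveI hQprob : IsProbabilityMeasure Qstar := by
    constructor
    rw [hQdens, withDensity_apply _ MeasurableSet.univ, Measure.restrict_univ]
    have hde : ∀ ω, ((dens ω : ℝ≥0∞)) = ENNReal.ofReal (Wf ω) * (ENNReal.ofReal z)⁻¹ := by
      intro ω
      rw [show ((dens ω : ℝ≥0∞)) = ENNReal.ofReal (Wf ω / z) from rfl,
        ENNReal.ofReal_div_of_pos hzpos, div_eq_mul_inv]
    rw [show (fun ω => ((dens ω : ℝ≥0∞))) = fun ω => ENNReal.ofReal (Wf ω) * (ENNReal.ofReal z)⁻¹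
      from funext hde]
    rw [lintegral_mul_const _ hW_meas.ennreal_ofReal, ← hZeq]
    have h0 : Z ≠ 0 := hZpos.ne'
    have hfin : Z ≠ ∞ := hZfin
    exact ENNReal.mul_inv_cancel h0 hfin
  have hQac : Qstar ≪ P := withDensity_absolutelyContinuous _ _
  -- bounds for the instrument at time t
  obtain ⟨CT, hCT⟩ := hHT_bdd t ht
  obtain ⟨CM, hCM⟩ := hHmid_bdd t ht
  set X : Ω → ℝ := fun ω => HT t ω i - Hmid t ω i with hX
  obtain ⟨ha1, ha2, ha3⟩ := hcomp_meas t ht i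
  have hX_meas : Measurable X := ha2.sub ha3
  have hXbd : ∀ᵐ ω ∂P, |X ω| ≤ CT + CM := by
    filter_upwards [hCT, hCM] with ω h1 h2
    exact le_trans (abs_sub _ _) (add_le_add (h1 i) (h2 i))
  -- first-order condition
  have hfoc : ∀ s : Set Ω, MeasurableSet[F t] s →
      ∫ ω, Wf ω * (s.indicator (fun _ => (1:ℝ)) ω * X ω) ∂P = 0 := by
    intro s hs
    have hs' : MeasurableSet s := hF_le t s hs
    set hfun : Ω → ℝ := fun ω => s.indicator (fun _ => (1:ℝ)) ω * X ω with hhfun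
    have hh_meas : Measurable hfun :=
      ((measurable_const.indicator hs')).mul hX_meas
    have hind_bd : ∀ ω, |s.indicator (fun _ => (1:ℝ)) ω| ≤ 1 := by
      intro ω
      by_cases hω : ω ∈ s <;> simp [Set.indicator_apply, hω]
    have hhb : ∀ᵐ ω ∂P, |hfun ω| ≤ CT + CM := by
      filter_upwards [hXbd] with ω h1
      rw [hhfun]
      calc |s.indicator (fun _ => (1:ℝ)) ω * X ω| = |s.indicator (fun _ => (1:ℝ)) ω| * |X ω| :=
            abs_mul _ _
        _ ≤ 1 * (CT + CM) := mul_le_mul (hind_bd ω) h1 (abs_nonneg _)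
            (by norm_num)
        _ = CT + CM := one_mul _
    -- the perturbation argument
    have hpert : ∀ ε : ℝ, ∫ ω, Wf ω ∂P ≤ ∫ ω, Wf ω * Real.exp (-(ε * hfun ω)) ∂P := by
      intro ε
      set aε : ℕ → Ω → Fin n → ℝ := fun t' =>
        if t' = t then (fun ω j => astar t ω j +
          if j = i then ε * s.indicator (fun _ => (1:ℝ)) ω else 0) else astar t' with haε
      have haεt : aε t = (fun ω j => astar t ω j +
          if j = i then ε * s.indicator (fun _ => (1:ℝ)) ω else 0) := by
        simp [haε]
      have haεne : ∀ t', t' ≠ t → aε t' = astar t' := fun t' h => by simp [haε, h]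
      have hpol : IsPolicy P m n F aε := by
        intro t' ht'
        by_cases h : t' = t
        · subst h
          rw [haεt]
          constructor
          · have hall : ∀ j, Measurable[F t'] (fun ω => astar t' ω j +
                if j = i then ε * s.indicator (fun _ => (1:ℝ)) ω else 0) := by
              intro j
              apply Measurable.add
              · exact (measurable_pi_apply j).comp (hastar t' ht').1
              · by_cases hj : j = i
                · simp only [hj, if_pos rfl]
                  exact (Measurable.indicator measurable_const hs).const_mul ε
                · simp only [if_neg hj]
                  exact measurable_const
            exact @measurable_pi_lambda Ω (Fin n) (fun _ => ℝ) (F t') _ _ hall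
          · obtain ⟨C, hC⟩ := (hastar t' ht').2
            refine ⟨C + |ε|, ?_⟩
            filter_upwards [hC] with ω h1 j
            refine le_trans (abs_add_le _ _) (add_le_add (h1 j) ?_)
            by_cases hj : j = i
            · rw [hj, if_pos rfl, abs_mul]
              calc |ε| * |s.indicator (fun _ => (1:ℝ)) ω| ≤ |ε| * 1 :=
                    mul_le_mul_of_nonneg_left (hind_bd ω) (abs_nonneg _)
                _ = |ε| := mul_one _
            · simp [if_neg hj]
        · rw [haεne t' h]
          exact hastar t' ht'
      have hgain : ∀ ω, linGain m n Hmid HT aε ω = G ω + ε * hfun ω := by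
        intro ω
        rw [hGdef]
        unfold linGain
        have hsplit : ∀ t' ∈ Finset.range m,
            ∑ j, aε t' ω j * (HT t' ω j - Hmid t' ω j)
              = (∑ j, astar t' ω j * (HT t' ω j - Hmid t' ω j)) +
                (if t' = t then ε * hfun ω else 0) := by
          intro t' _
          by_cases h : t' = t
          · subst h
            rw [haεt, if_pos rfl]
            simp only []
            simp_rw [add_mul]
            rw [Finset.sum_add_distrib]
            congr 1
            rw [hhfun]
            simp_rw [ite_mul, zero_mul]
            rw [Finset.sum_ite_eq' Finset.univ i
              (fun j => ε * s.indicator (fun _ => (1:ℝ)) ω * (HT t' ω j - Hmid t' ω j))]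
            simp [mul_assoc, hX]
          · rw [haεne t' h, if_neg h, add_zero]
        rw [Finset.sum_congr rfl hsplit, Finset.sum_add_distrib,
          Finset.sum_ite_eq' (Finset.range m) t (fun _ => ε * hfun ω),
          if_pos (Finset.mem_range.mpr ht)]
      have hptw : ∀ ω, Real.exp (-(linGain m n Hmid HT aε ω))
          = Wf ω * Real.exp (-(ε * hfun ω)) := by
        intro ω
        rw [hgain ω, neg_add, Real.exp_add]
      have intR : Integrable (fun ω => Wf ω * Real.exp (-(ε * hfun ω))) P := by
        refine Integrable.mono' (integrable_const (Real.exp B * Real.exp (|ε| * (CT + CM))))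
          (hW_meas.mul ((measurable_const.mul hh_meas).neg.exp)).aestronglyMeasurable ?_
        filter_upwards [hWub, hhb] with ω h1 h2
        rw [Real.norm_eq_abs, abs_mul, abs_of_nonneg (hWnn ω), abs_of_pos (Real.exp_pos _)]
        refine mul_le_mul h1 (Real.exp_le_exp.2 ?_) (Real.exp_pos _).le (Real.exp_nonneg _)
        calc -(ε * hfun ω) ≤ |ε * hfun ω| := neg_le_abs _
          _ = |ε| * |hfun ω| := abs_mul _ _
          _ ≤ |ε| * (CT + CM) := mul_le_mul_of_nonneg_left h2 (abs_nonneg _)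
      have hlin := hmin aε hpol
      have hlin' : ENNReal.ofReal (∫ ω, Wf ω ∂P)
          ≤ ENNReal.ofReal (∫ ω, Wf ω * Real.exp (-(ε * hfun ω)) ∂P) := by
        calc ENNReal.ofReal (∫ ω, Wf ω ∂P) = Z := hZeq.symm
          _ ≤ ∫⁻ ω, ENNReal.ofReal (Real.exp (-linGain m n Hmid HT aε ω)) ∂P := hlin
          _ = ∫⁻ ω, ENNReal.ofReal (Wf ω * Real.exp (-(ε * hfun ω))) ∂P := by
              simp_rw [hptw]
          _ = ENNReal.ofReal (∫ ω, Wf ω * Real.exp (-(ε * hfun ω)) ∂P) :=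
              (ofReal_integral_eq_lintegral_ofReal intR
                (ae_of_all _ fun ω => mul_nonneg (hWnn ω) (Real.exp_pos _).le)).symm
      exact (ENNReal.ofReal_le_ofReal_iff
        (integral_nonneg fun ω => mul_nonneg (hWnn ω) (Real.exp_pos _).le)).mp hlin'
    -- apply the key lemma
    exact key_lemma P Wf hfun hW_meas hh_meas (Real.exp B) (CT + CM) hWnn hWub hhb hpert
  -- set-integral form of the first-order condition
  have hsetP : ∀ s : Set Ω, MeasurableSet[F t] s → ∫ ω in s, Wf ω * X ω ∂P = 0 := by
    intro s hs
    have hs' : MeasurableSet s := hF_le t s hs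
    rw [← integral_indicator hs', ← hfoc s hs]
    congr 1
    funext ω
    by_cases hω : ω ∈ s <;> simp [Set.indicator_apply, hω]
  -- integrability w.r.t. Qstar
  have hfint : Integrable (fun ω => HT t ω i) Qstar := by
    refine Integrable.mono' (integrable_const CT) ha2.aestronglyMeasurable ?_
    filter_upwards [hCT.filter_mono hQac.ae_le] with ω h1
    rw [Real.norm_eq_abs]
    exact h1 i
  have hgint : Integrable (fun ω => Hmid t ω i) Qstar := by
    refine Integrable.mono' (integrable_const CM) ha3.aestronglyMeasurable ?_
    filter_upwards [hCM.filter_mono hQac.ae_le] with ω h1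
    rw [Real.norm_eq_abs]
    exact h1 i
  -- set integrals agree
  have hseteq : ∀ s : Set Ω, MeasurableSet[F t] s →
      ∫ ω in s, Hmid t ω i ∂Qstar = ∫ ω in s, HT t ω i ∂Qstar := by
    intro s hs
    have hs' : MeasurableSet s := hF_le t s hs
    have hrw : ∀ g : Ω → ℝ, ∫ ω in s, g ω ∂Qstar = ∫ ω in s, (Wf ω / z) * g ω ∂P := by
      intro g
      rw [hQdens, restrict_withDensity hs', integral_withDensity_eq_integral_smul hdens_meas]
      congr 1
      funext ω
      rw [NNReal.smul_def, smul_eq_mul, hdens_coe]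
    rw [hrw, hrw]
    have hint : ∀ (g : Ω → ℝ) (C : ℝ), Measurable g → (∀ᵐ ω ∂P, |g ω| ≤ C) →
        Integrable (fun ω => (Wf ω / z) * g ω) P := by
      intro g C hg hgb
      refine Integrable.mono' (integrable_const ((Real.exp B / z) * C))
        ((hW_meas.div_const z).mul hg).aestronglyMeasurable ?_
      filter_upwards [hWub, hgb] with ω h1 h2
      rw [Real.norm_eq_abs, abs_mul, abs_of_nonneg (div_nonneg (hWnn ω) hzpos.le)]
      have h3 : Wf ω / z ≤ Real.exp B / z := by gcongr
      exact mul_le_mul h3 h2 (abs_nonneg _) (div_nonneg (Real.exp_nonneg _) hzpos.le)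
    have i1 : IntegrableOn (fun ω => (Wf ω / z) * HT t ω i) s P :=
      (hint _ CT ha2 (hCT.mono fun ω h => h i)).integrableOn
    have i2 : IntegrableOn (fun ω => (Wf ω / z) * Hmid t ω i) s P :=
      (hint _ CM ha3 (hCM.mono fun ω h => h i)).integrableOn
    have hdiff : ∫ ω in s, ((Wf ω / z) * HT t ω i - (Wf ω / z) * Hmid t ω i) ∂P = 0 := by
      have heq : ∀ ω, (Wf ω / z) * HT t ω i - (Wf ω / z) * Hmid t ω i
          = (Wf ω * X ω) / z := by
        intro ω
        rw [hX]
        ring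
      simp_rw [heq]
      rw [integral_div, hsetP s hs, zero_div]
    rw [integral_sub i1 i2] at hdiff
    linarith
  -- conclude via uniqueness of conditional expectation
  haveI : SigmaFinite (Qstar.trim (hF_le t)) := by
    haveI : IsFiniteMeasure (Qstar.trim (hF_le t)) := isFiniteMeasure_trim _
    infer_instance
  refine (ae_eq_condExp_of_forall_setIntegral_eq (hF_le t) hfint
    (fun s _ _ => hgint.integrableOn) (fun s hs _ => hseteq s hs) ?_).symm
  exact StronglyMeasurable.aestronglyMeasurable
    (Measurable.stronglyMeasurable ((measurable_pi_apply i).comp (hHmid_meas t ht)))
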